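/- In a Euclidean Hurwitz algebra, if x and y are orthonormal vectors each orthogonal to the unit element 1, then (x · y) · x = y and x · (y · x) = y. -/

import Mathlib

theorem stmt_6 {A : Type*} [NormedAddCommGroup A] [InnerProductSpace ℝ A]
    (mul : A →ₗ[ℝ] A →ₗ[ℝ] A) (e : A) (he : ‖e‖ = 1)
    (hul : ∀ x, mul e x = x) (hur : ∀ x, mul x e = x)
    (hmon : ∀ x y, ‖mul x y‖ = ‖x‖ * ‖y‖)
    (x y : A) (hx : ‖x‖ = 1) (hy : ‖y‖ = 1)
    (hxe : (inner ℝ x e : ℝ) = 0) (hye : (inner ℝ y e : ℝ) = 0)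
    (hxy : (inner ℝ x y : ℝ) = 0) :
    mul (mul x y) x = y ∧ mul x (mul y x) = y := by
  have key : ∀ a b c : A, (inner ℝ (mul a b) (mul a c) : ℝ) = ‖a‖ ^ 2 * inner ℝ b c := by
    intro a b c
    have h1 := hmon a (b + c)
    have h2 := hmon a b
    have h3 := hmon a c
    have e1 : ‖mul a (b + c)‖ ^ 2
        = ‖mul a b‖ ^ 2 + 2 * inner ℝ (mul a b) (mul a c) + ‖mul a c‖ ^ 2 := by
      rw [map_add, ← real_inner_self_eq_norm_sq, real_inner_add_add_self,
        real_inner_self_eq_norm_sq, real_inner_self_eq_norm_sq]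
    have e2 : ‖b + c‖ ^ 2 = ‖b‖ ^ 2 + 2 * inner ℝ b c + ‖c‖ ^ 2 := by
      rw [← real_inner_self_eq_norm_sq, real_inner_add_add_self,
        real_inner_self_eq_norm_sq, real_inner_self_eq_norm_sq]
    have s1 : ‖a‖ ^ 2 * ‖b + c‖ ^ 2
        = ‖mul a b‖ ^ 2 + 2 * inner ℝ (mul a b) (mul a c) + ‖mul a c‖ ^ 2 := by
      rw [← e1, h1]; ring
    rw [e2, h2, h3] at s1
    nlinarith [s1]
  have pol : ∀ a b c d : A,
      (inner ℝ (mul a c) (mul b d) : ℝ) + inner ℝ (mul a d) (mul b c)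
        = 2 * inner ℝ a b * inner ℝ c d := by
    intro a b c d
    have h := key (a + b) c d
    have hab : ‖a + b‖ ^ 2 = ‖a‖ ^ 2 + 2 * inner ℝ a b + ‖b‖ ^ 2 := by
      rw [← real_inner_self_eq_norm_sq, real_inner_add_add_self,
        real_inner_self_eq_norm_sq, real_inner_self_eq_norm_sq]
    have hmc : mul (a + b) c = mul a c + mul b c := by
      rw [map_add]; rfl
    have hmd : mul (a + b) d = mul a d + mul b d := by
      rw [map_add]; rfl
    rw [hmc, hmd, hab, inner_add_left, inner_add_right, inner_add_right,
      key a c d, key b c d] at h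
    linarith [h, real_inner_comm (mul b c) (mul a d)]
  -- skew-adjointness of multiplication by x and y
  have lskewx : ∀ b c : A, (inner ℝ (mul x b) c : ℝ) = - inner ℝ (mul x c) b := by
    intro b c
    have h := pol x e b c
    rw [hul, hul, hxe] at h
    linarith
  have lskewy : ∀ b c : A, (inner ℝ (mul y b) c : ℝ) = - inner ℝ (mul y c) b := by
    intro b c
    have h := pol y e b c
    rw [hul, hul, hye] at h
    linarith
  have rskewx : ∀ a b : A, (inner ℝ (mul a x) b : ℝ) = - inner ℝ a (mul b x) := by
    intro a b
    have h := pol a b x e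
    rw [hur, hur] at h
    have hex : (inner ℝ x e : ℝ) = 0 := hxe
    rw [hex] at h
    linarith
  have rskewy : ∀ a b : A, (inner ℝ (mul a y) b : ℝ) = - inner ℝ a (mul b y) := by
    intro a b
    have h := pol a b y e
    rw [hur, hur, hye] at h
    linarith
  -- x * x = -e
  have hxx : mul x x = -e := by
    apply ext_inner_right ℝ
    intro c
    have h1 := lskewx x c
    have h2 : (inner ℝ (mul x c) (mul x e) : ℝ) = ‖x‖ ^ 2 * inner ℝ c e := key x c e
    rw [hur, hx] at h2
    have h3 : (inner ℝ ((-e : A)) c : ℝ) = - inner ℝ e c := by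
      rw [inner_neg_left]
    rw [h1, h2, h3]
    rw [real_inner_comm e c]
    ring
  have hyx : (inner ℝ y x : ℝ) = 0 := by rw [real_inner_comm]; exact hxy
  constructor
  · apply ext_inner_right ℝ
    intro c
    have h1 : (inner ℝ (mul (mul x y) x) c : ℝ) = - inner ℝ (mul x y) (mul c x) :=
      rskewx (mul x y) c
    have h2 := pol x c y x
    rw [hxx, hyx] at h2
    have h3 : (inner ℝ ((-e : A)) (mul c y) : ℝ) = - inner ℝ e (mul c y) := by
      rw [inner_neg_left]
    rw [h3] at h2
    have h4 : (inner ℝ (mul c y) e : ℝ) = - inner ℝ c y := by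
      have := rskewy c e
      rwa [hul] at this
    have h5 := real_inner_comm e (mul c y)
    have h6 := real_inner_comm c y
    rw [h1]
    linarith
  · apply ext_inner_right ℝ
    intro c
    have h1 : (inner ℝ (mul x (mul y x)) c : ℝ) = - inner ℝ (mul x c) (mul y x) :=
      lskewx (mul y x) c
    have h2 := pol x y c x
    rw [hxx, hxy] at h2
    have h3 : (inner ℝ ((-e : A)) (mul y c) : ℝ) = - inner ℝ e (mul y c) := by
      rw [inner_neg_left]
    rw [h3] at h2
    have h4 : (inner ℝ (mul y c) e : ℝ) = - inner ℝ y c := by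
      have := lskewy c e
      rw [hur] at this
      linarith [real_inner_comm (mul y c) e, this]
    have h5 := real_inner_comm e (mul y c)
    rw [h1]
    linarith
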